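/- Let G be a pseudo-planar graph with α(G) = 2 whose independence complex Δ(G) is Eulerian. Then Δ(G) is connected. -/

import Mathlib

open Finset
open Classical

noncomputable section

variable {V : Type*}

/-- An (abstract) simplicial complex on `V`, given as a finite set of finite faces:
nonvoid (contains the empty face) and closed under taking subsets. -/
def IsComplex (Δ : Finset (Finset V)) : Prop :=
  ∅ ∈ Δ ∧ ∀ F ∈ Δ, ∀ H ⊆ F, H ∈ Δ

/-- The reduced Euler characteristic `χ̃(Δ) = Σ_{F ∈ Δ} (-1)^{|F| - 1}`. -/
def chiT (Δ : Finset (Finset V)) : ℤ :=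
  ∑ F ∈ Δ, (-1 : ℤ) ^ (F.card + 1)

/-- The link of a face `F` in `Δ`. -/
def link (Δ : Finset (Finset V)) (F : Finset V) : Finset (Finset V) :=
  Δ.filter (fun H => H ∪ F ∈ Δ ∧ H ∩ F = ∅)

/-- The facets (maximal faces) of `Δ`. -/
def facets (Δ : Finset (Finset V)) : Finset (Finset V) :=
  Δ.filter (fun F => ∀ H ∈ Δ, F ⊆ H → F = H)

/-- `Δ` is pure: all facets have the same cardinality. -/
def PureC (Δ : Finset (Finset V)) : Prop :=
  ∀ F ∈ facets Δ, ∀ H ∈ facets Δ, F.card = H.card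

/-- One more than the dimension of `Δ`: the maximal cardinality of a face. -/
def maxCard (Δ : Finset (Finset V)) : ℕ := Δ.sup Finset.card

/-- The dimension of `Δ` as an integer (`-1` for `Δ = {∅}`). -/
def dimC (Δ : Finset (Finset V)) : ℤ := (maxCard Δ : ℤ) - 1

/-- `Δ` is an Euler complex: pure, and every link has reduced Euler characteristic
`(-1)^{dim}` (note `(-1)^{dim lk} = (-1)^{maxCard lk + 1}`). -/
def Eulerian (Δ : Finset (Finset V)) : Prop :=
  PureC Δ ∧ ∀ F ∈ Δ, chiT (link Δ F) = (-1 : ℤ) ^ (maxCard (link Δ F) + 1)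

/-- `Δ` is semi-Eulerian: the link of each vertex is Eulerian. -/
def SemiEulerian (Δ : Finset (Finset V)) : Prop :=
  ∀ x : V, {x} ∈ Δ → Eulerian (link Δ {x})

/-- The independence complex of a graph `G`: faces are the independent sets. -/
def indepC (G : SimpleGraph V) [Fintype V] : Finset (Finset V) :=
  Finset.univ.filter (fun s => ∀ a ∈ s, ∀ b ∈ s, ¬ G.Adj a b)

/-- The independence number `α(G)`. -/
def indNum (G : SimpleGraph V) [Fintype V] : ℕ := (indepC G).sup Finset.card

/-- `G` is well-covered: every maximal independent set has cardinality `α(G)`. -/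
def WellCovered (G : SimpleGraph V) [Fintype V] : Prop :=
  ∀ s ∈ indepC G, (∀ t ∈ indepC G, s ⊆ t → s = t) → s.card = indNum G

/-- The vertex set of the localization `G_S = G \ (S ∪ N_G(S))`. -/
def locSet (G : SimpleGraph V) (S : Finset V) : Set V :=
  {v | v ∉ S ∧ ∀ u ∈ S, ¬ G.Adj v u}

/-- The localization `G_S`, as an induced subgraph. -/
def locG (G : SimpleGraph V) (S : Finset V) : SimpleGraph (locSet G S) :=
  G.induce (locSet G S)

/-- The deletion `G ∖ v`, as an induced subgraph. -/
def Gdel (G : SimpleGraph V) (v : V) : SimpleGraph {u : V // u ≠ v} :=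
  G.induce {u | u ≠ v}

/-- `G` belongs to the class `W₂`: it is well-covered and for every vertex `v`,
`G ∖ v` is well-covered with `α(G ∖ v) = α(G)`. -/
def InW2 (G : SimpleGraph V) [Fintype V] : Prop :=
  WellCovered G ∧ ∀ v : V, WellCovered (Gdel G v) ∧ indNum (Gdel G v) = indNum G

/-- `δ*(v)`: the number of non-isolated vertices of the induced subgraph `H[N_H(v)]`. -/
def deltaStarV {T : Type*} (H : SimpleGraph T) [Fintype T] (v : T) : ℕ :=
  (Finset.univ.filter (fun u => H.Adj v u ∧ ∃ w, H.Adj v w ∧ H.Adj u w)).card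

/-- `2K₂`: two disjoint edges. -/
def twoK2 : SimpleGraph (Fin 4) := SimpleGraph.fromEdgeSet {s(0, 1), s(2, 3)}

/-- The join `G * H` of two disjoint graphs. -/
def joinG {α β : Type*} (G : SimpleGraph α) (H : SimpleGraph β) : SimpleGraph (α ⊕ β) where
  Adj x y :=
    match x, y with
    | Sum.inl a, Sum.inl b => G.Adj a b
    | Sum.inr a, Sum.inr b => H.Adj a b
    | Sum.inl _, Sum.inr _ => True
    | Sum.inr _, Sum.inl _ => True
  symm := ⟨by
    rintro (a | a) (b | b) h
    · exact h.symm
    · trivial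
    · trivial
    · exact h.symm⟩
  loopless := ⟨by
    rintro (a | a) h
    · exact G.irrefl h
    · exact H.irrefl h⟩

/-- `G` is pseudo-planar: for every independent set `S`, `δ*(G_S) ≤ 5` and
`G_S` is not isomorphic to `2K₂ * 2K₂`. -/
def PseudoPlanar (G : SimpleGraph V) [Fintype V] : Prop :=
  ∀ S ∈ indepC G,
    ((locSet G S).Nonempty → ∃ v : locSet G S, deltaStarV (locG G S) v ≤ 5) ∧
    IsEmpty (locG G S ≃g joinG twoK2 twoK2)

/-- `H` is a minor of `G`: there are disjoint nonempty connected branch sets in `G`,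
one for each vertex of `H`, with edges between branch sets of adjacent vertices. -/
def IsMinor {α β : Type*} (H : SimpleGraph β) (G : SimpleGraph α) : Prop :=
  ∃ B : β → Set α,
    (∀ u, (B u).Nonempty) ∧ (∀ u, (G.induce (B u)).Connected) ∧
    (∀ u w, u ≠ w → Disjoint (B u) (B w)) ∧
    (∀ u w, H.Adj u w → ∃ x ∈ B u, ∃ y ∈ B w, G.Adj x y)

def K5 : SimpleGraph (Fin 5) := ⊤

def K33 : SimpleGraph (Fin 3 ⊕ Fin 3) := completeBipartiteGraph (Fin 3) (Fin 3)

/-- Planarity via Wagner's theorem: no `K₅` minor and no `K_{3,3}` minor. -/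
def Planar (G : SimpleGraph V) : Prop := ¬ IsMinor K5 G ∧ ¬ IsMinor K33 G

/-- The 5-cycle on `Fin 5`. -/
def C5 : SimpleGraph (Fin 5) :=
  SimpleGraph.fromEdgeSet {s(0, 1), s(1, 2), s(2, 3), s(3, 4), s(4, 0)}

/-- A pentagon (5-cycle) with exactly one chord. -/
def pentChord : SimpleGraph (Fin 5) :=
  SimpleGraph.fromEdgeSet {s(0, 1), s(1, 2), s(2, 3), s(3, 4), s(4, 0), s(1, 3)}

/-- The bowtie: two triangles sharing exactly one vertex. -/
def bowtie : SimpleGraph (Fin 5) :=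
  SimpleGraph.fromEdgeSet {s(0, 1), s(1, 2), s(2, 0), s(1, 3), s(3, 4), s(4, 1)}

/-- The possible chords of the 5-cycle `C5`. -/
def chordSet : Finset (Sym2 (Fin 5)) := {s(0, 2), s(0, 3), s(1, 3), s(1, 4), s(2, 4)}

/-- The simplicial boundary map on chains (with coefficients in `k`),
sending `e_F ↦ Σ_{v ∈ F} (-1)^{pos of v in F} e_{F ∖ v}`. -/
def bdry (k : Type*) [Field k] [LinearOrder V] : (Finset V →₀ k) →ₗ[k] (Finset V →₀ k) :=
  Finsupp.lsum k fun F => (LinearMap.id : k →ₗ[k] k).smulRight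
    (∑ v ∈ F, ((-1 : k) ^ (F.filter (fun w => w < v)).card) • Finsupp.single (F.erase v) (1 : k))

/-- The submodule of `c`-chains of `Δ`: spanned by basis elements of faces of cardinality `c`. -/
def chainsSub (k : Type*) [Field k] (Δ : Finset (Finset V)) (c : ℕ) :
    Submodule k (Finset V →₀ k) :=
  Submodule.span k {x | ∃ F ∈ Δ, F.card = c ∧ x = Finsupp.single F (1 : k)}

/-- Vanishing of the reduced simplicial homology `H̃_{c-1}(Δ; k)`:
every cycle supported on faces of cardinality `c` is a boundary. -/
def HVanish (k : Type*) [Field k] [LinearOrder V] (Δ : Finset (Finset V)) (c : ℕ) : Prop :=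
  ∀ ω ∈ chainsSub k Δ c, bdry k ω = 0 → ∃ η ∈ chainsSub k Δ (c + 1), bdry k η = ω

/-- Cohen–Macaulayness of `Δ` over `k`, via Reisner's criterion:
`H̃_i(lk_Δ F; k) = 0` for all faces `F` and all `i < dim lk_Δ F`. -/
def IsCM (k : Type*) [Field k] [LinearOrder V] (Δ : Finset (Finset V)) : Prop :=
  ∀ F ∈ Δ, ∀ c : ℕ, (c : ℤ) - 1 < dimC (link Δ F) → HVanish k (link Δ F) c

/-- The core of `Δ`: the restriction of `Δ` to the vertices `x` with `st_Δ(x) ≠ Δ`. -/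
def coreC (Δ : Finset (Finset V)) : Finset (Finset V) :=
  Δ.filter (fun F => ∀ x ∈ F, ∃ H ∈ Δ, H ∪ {x} ∉ Δ)

/-- Gorensteinness of `Δ` over `k`, via Stanley's criterion:
`core Δ` is a Cohen–Macaulay Euler complex. -/
def IsGor (k : Type*) [Field k] [LinearOrder V] (Δ : Finset (Finset V)) : Prop :=
  IsCM k (coreC Δ) ∧ Eulerian (coreC Δ)

/-- Connectedness of `Δ` (all vertices of `V` being vertices of `Δ`):
its 1-skeleton graph is connected. -/
def ComplexConnected (Δ : Finset (Finset V)) : Prop :=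
  (SimpleGraph.fromRel fun a b => ({a, b} : Finset V) ∈ Δ).Connected

/-- `Δ` is connected in codimension one. -/
def ConnCodimOne (Δ : Finset (Finset V)) : Prop :=
  ∀ F ∈ facets Δ, ∀ H ∈ facets Δ,
    Relation.ReflTransGen
      (fun A B => A ∈ facets Δ ∧ B ∈ facets Δ ∧ (A ∩ B).card = maxCard Δ - 1) F H

/-- The graph obtained from `H` and a vertex `x` by adding new vertices `a, b, c`
(coded `0, 1, 2 : Fin 3`), joining `a` to `b` and to every neighbor of `x`,
`b` to `c`, and `c` to `x`. -/
def extGraph (H : SimpleGraph V) (x : V) : SimpleGraph (V ⊕ Fin 3) :=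
  SimpleGraph.fromRel fun p q =>
    match p, q with
    | Sum.inl u, Sum.inl w => H.Adj u w
    | Sum.inl u, Sum.inr i => (i = 0 ∧ H.Adj u x) ∨ (i = 2 ∧ u = x)
    | Sum.inr i, Sum.inr j => (i = 0 ∧ j = 1) ∨ (i = 1 ∧ j = 2)
    | Sum.inr _, Sum.inl _ => False

end

section Aux
open Finset Classical
variable {V : Type*} [Fintype V] (G : SimpleGraph V)

lemma aux_mem_indepC (s : Finset V) : s ∈ indepC G ↔ ∀ a ∈ s, ∀ b ∈ s, ¬G.Adj a b := by
  simp [indepC]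

lemma aux_empty_mem : (∅ : Finset V) ∈ indepC G := by simp [indepC]

lemma aux_single_mem (x : V) : ({x} : Finset V) ∈ indepC G := by simp [indepC]

lemma aux_pair_mem {x y : V} (h : ¬G.Adj x y) : ({x, y} : Finset V) ∈ indepC G := by
  rw [aux_mem_indepC]
  intro a ha b hb
  simp only [Finset.mem_insert, Finset.mem_singleton] at ha hb
  rcases ha with rfl | rfl <;> rcases hb with rfl | rfl <;>
    simp_all [SimpleGraph.adj_comm]

lemma aux_card_le (hα : indNum G = 2) {s : Finset V} (hs : s ∈ indepC G) : s.card ≤ 2 := by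
  rw [← hα]; exact Finset.le_sup hs

lemma aux_tri (hα : indNum G = 2) {x y z : V} (hxy : x ≠ y) (hxz : x ≠ z) (hyz : y ≠ z)
    (h1 : ¬G.Adj x y) (h2 : ¬G.Adj x z) (h3 : ¬G.Adj y z) : False := by
  have hm : ({x, y, z} : Finset V) ∈ indepC G := by
    rw [aux_mem_indepC]
    intro a ha b hb
    simp only [Finset.mem_insert, Finset.mem_singleton] at ha hb
    rcases ha with rfl | rfl | rfl <;> rcases hb with rfl | rfl | rfl <;>
      simp_all [SimpleGraph.adj_comm]
  have hc : ({x, y, z} : Finset V).card = 3 := by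
    rw [Finset.card_insert_of_notMem (by simp [hxy, hxz]),
      Finset.card_insert_of_notMem (by simp [hyz]), Finset.card_singleton]
  have := aux_card_le G hα hm
  omega

/-- nonneighbors of x (excluding x). -/
noncomputable def nnF (x : V) : Finset V := univ.filter (fun y => y ≠ x ∧ ¬G.Adj x y)

lemma aux_mem_nnF {x y : V} : y ∈ nnF G x ↔ y ≠ x ∧ ¬G.Adj x y := by simp [nnF]

lemma aux_nnF_symm {x y : V} (h : y ∈ nnF G x) : x ∈ nnF G y := by
  rw [aux_mem_nnF] at h ⊢
  exact ⟨h.1.symm, fun ha => h.2 ha.symm⟩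

lemma aux_adj_of_not_mem {x y : V} (h1 : y ≠ x) (h2 : y ∉ nnF G x) : G.Adj x y := by
  rw [aux_mem_nnF] at h2; tauto

end Aux
section Aux2
open Finset Classical
variable {V : Type*} [Fintype V] (G : SimpleGraph V)

lemma aux_exists_pair (hα : indNum G = 2) : ∃ F ∈ indepC G, F.card = 2 := by
  obtain ⟨F, hF, hFc⟩ := Finset.exists_mem_eq_sup (indepC G) ⟨∅, aux_empty_mem G⟩ Finset.card
  exact ⟨F, hF, by rw [← hFc]; exact hα⟩

lemma aux_nnF_nonempty (hα : indNum G = 2) (heu : Eulerian (indepC G)) (x : V) :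
    (nnF G x).Nonempty := by
  by_contra hne
  rw [Finset.not_nonempty_iff_eq_empty] at hne
  obtain ⟨F, hF, hF2⟩ := aux_exists_pair G hα
  have hFfacet : F ∈ facets (indepC G) := by
    simp only [facets, Finset.mem_filter]
    exact ⟨hF, fun H hH hFH => Finset.eq_of_subset_of_card_le hFH
      (by rw [hF2]; exact aux_card_le G hα hH)⟩
  have hxfacet : ({x} : Finset V) ∈ facets (indepC G) := by
    simp only [facets, Finset.mem_filter]
    refine ⟨aux_single_mem G x, fun H hH hxH => ?_⟩
    refine (Finset.eq_of_subset_of_card_le hxH ?_)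
    by_contra hc
    push_neg at hc
    rw [Finset.card_singleton] at hc
    obtain ⟨y, hy, hyx⟩ : ∃ y ∈ H, y ≠ x := by
      by_contra hall
      push_neg at hall
      have : H ⊆ {x} := fun z hz => Finset.mem_singleton.mpr (hall z hz)
      have := Finset.card_le_card this
      simp at this; omega
    have : y ∈ nnF G x := by
      rw [aux_mem_nnF]
      exact ⟨hyx, (aux_mem_indepC G H).mp hH x (hxH (Finset.mem_singleton_self x)) y hy⟩
    rw [hne] at this; exact absurd this (Finset.notMem_empty y)
  have := heu.1 _ hxfacet _ hFfacet
  rw [Finset.card_singleton, hF2] at this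
  omega

lemma aux_link_single (hα : indNum G = 2) (x : V) :
    link (indepC G) {x} = insert ∅ ((nnF G x).image fun y => ({y} : Finset V)) := by
  ext H
  rw [link, Finset.mem_filter, Finset.mem_insert, Finset.mem_image]
  constructor
  · rintro ⟨hH, hHu, hHi⟩
    rcases Finset.eq_empty_or_nonempty H with rfl | ⟨y, hy⟩
    · exact Or.inl rfl
    · right
      have hxH : x ∉ H := by
        intro hx
        have : x ∈ H ∩ {x} := Finset.mem_inter.mpr ⟨hx, Finset.mem_singleton_self x⟩
        rw [hHi] at this; exact absurd this (Finset.notMem_empty x)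
      have hcard : (H ∪ {x}).card = H.card + 1 := by
        rw [Finset.union_comm, ← Finset.insert_eq, Finset.card_insert_of_notMem hxH]
      have h2 := aux_card_le G hα hHu
      rw [hcard] at h2
      have hc1 : H.card = 1 := le_antisymm (by omega) (Finset.card_pos.mpr ⟨y, hy⟩)
      obtain ⟨z, rfl⟩ := Finset.card_eq_one.mp hc1
      refine ⟨z, ?_, rfl⟩
      rw [aux_mem_nnF]
      have hzx : z ≠ x := by rintro rfl; exact hxH (Finset.mem_singleton_self z)
      refine ⟨hzx, ?_⟩
      have := (aux_mem_indepC G _).mp hHu x (by simp) z (by simp)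
      exact this
  · rintro (rfl | ⟨y, hy, rfl⟩)
    · refine ⟨aux_empty_mem G, ?_, by simp⟩
      simpa using aux_single_mem G x
    · rw [aux_mem_nnF] at hy
      refine ⟨aux_single_mem G y, ?_, by simp [hy.1]⟩
      have : ({y} ∪ {x} : Finset V) = {y, x} := rfl
      rw [this]
      exact aux_pair_mem G (fun h => hy.2 h.symm)

lemma aux_nn_card (hα : indNum G = 2) (heu : Eulerian (indepC G)) (x : V) :
    (nnF G x).card = 2 := by
  obtain ⟨y0, hy0⟩ := aux_nnF_nonempty G hα heu x
  have hlink := aux_link_single G hα x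
  have hnotmem : (∅ : Finset V) ∉ (nnF G x).image fun y => ({y} : Finset V) := by
    simp
  have hchi : chiT (link (indepC G) {x}) = (nnF G x).card - 1 := by
    rw [hlink, chiT, Finset.sum_insert hnotmem, Finset.sum_image
      (fun a _ b _ h => Finset.singleton_injective h)]
    simp [Finset.card_singleton]
    ring
  have hmax : maxCard (link (indepC G) {x}) = 1 := by
    rw [hlink, maxCard]
    apply le_antisymm
    · apply Finset.sup_le
      intro F hF
      rw [Finset.mem_insert, Finset.mem_image] at hF
      rcases hF with rfl | ⟨y, _, rfl⟩ <;> simp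
    · calc 1 = ({y0} : Finset V).card := by simp
        _ ≤ _ := Finset.le_sup (Finset.mem_insert_of_mem (Finset.mem_image_of_mem _ hy0))
  have := heu.2 {x} (aux_single_mem G x)
  rw [hchi, hmax] at this
  norm_num at this
  omega
end Aux2
section Aux3
open Finset Classical
variable {V : Type*} [Fintype V] (G : SimpleGraph V)

lemma aux_pair_other {s : Finset V} (h2 : s.card = 2) {u : V} (hu : u ∈ s) :
    ∃ c, c ≠ u ∧ s = {u, c} := by
  obtain ⟨x, y, hxy, rfl⟩ := Finset.card_eq_two.mp h2
  rcases Finset.mem_insert.mp hu with rfl | hy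
  · exact ⟨y, fun h => hxy h.symm, rfl⟩
  · rw [Finset.mem_singleton] at hy; subst hy
    exact ⟨x, hxy, Finset.pair_comm x u⟩

lemma aux_eq_pair {s : Finset V} (h2 : s.card = 2) {a b : V} (ha : a ∈ s) (hb : b ∈ s)
    (hab : a ≠ b) : s = {a, b} := by
  refine (Finset.eq_of_subset_of_card_le ?_ ?_).symm
  · intro z hz
    rcases Finset.mem_insert.mp hz with rfl | hz
    · exact ha
    · rw [Finset.mem_singleton] at hz; subst hz; exact hb
  · rw [h2, Finset.card_insert_of_notMem (by simp [hab]), Finset.card_singleton]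

lemma aux_quad (hα : indNum G = 2) (heu : Eulerian (indepC G)) (u : V) :
    ∃ a b c : V, a ≠ u ∧ b ≠ u ∧ c ≠ u ∧ a ≠ b ∧ a ≠ c ∧ b ≠ c ∧
      nnF G u = {a, b} ∧ nnF G a = {u, c} := by
  have hc := aux_nn_card G hα heu
  obtain ⟨a, b, hab, hnnu⟩ := Finset.card_eq_two.mp (hc u)
  have ha : a ∈ nnF G u := by rw [hnnu]; simp
  have hb : b ∈ nnF G u := by rw [hnnu]; simp
  have hau : a ≠ u := (aux_mem_nnF G |>.mp ha).1
  have hbu : b ≠ u := (aux_mem_nnF G |>.mp hb).1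
  have hua : u ∈ nnF G a := aux_nnF_symm G ha
  obtain ⟨c, hcu, hnna⟩ := aux_pair_other (hc a) hua
  have hcmem : c ∈ nnF G a := by rw [hnna]; simp
  have hca : c ≠ a := (aux_mem_nnF G |>.mp hcmem).1
  have hcb : c ≠ b := by
    rintro rfl
    exact aux_tri G hα hau.symm hbu.symm hab
      (aux_mem_nnF G |>.mp ha).2 (aux_mem_nnF G |>.mp hb).2 (aux_mem_nnF G |>.mp hcmem).2
  exact ⟨a, b, c, hau, hbu, hcu, hab, fun h => hca h.symm, fun h => hcb h.symm, hnnu, hnna⟩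

end Aux3
section Aux4
open Finset Classical
variable {V : Type*} [Fintype V] (G : SimpleGraph V)

lemma aux_mem_locSet_empty (z : V) : z ∈ locSet G (∅ : Finset V) := by
  constructor
  · exact Finset.notMem_empty z
  · intro u hu; exact absurd hu (Finset.notMem_empty u)

lemma aux_common_nbr (hα : indNum G = 2) (heu : Eulerian (indepC G))
    (h9 : 7 ≤ Fintype.card V) (p q : V) : ∃ w, G.Adj p w ∧ G.Adj q w := by
  classical
  set B : Finset V := insert p (nnF G p) ∪ insert q (nnF G q) with hB
  have hBcard : B.card ≤ 6 := by
    calc B.card ≤ (insert p (nnF G p)).card + (insert q (nnF G q)).card :=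
          Finset.card_union_le _ _
      _ ≤ 6 := by
          have h1 := Finset.card_insert_le p (nnF G p)
          have h2 := Finset.card_insert_le q (nnF G q)
          rw [aux_nn_card G hα heu p] at h1
          rw [aux_nn_card G hα heu q] at h2
          omega
  have : (Finset.univ \ B).Nonempty := by
    rw [← Finset.card_pos, Finset.card_sdiff_of_subset (Finset.subset_univ B), Finset.card_univ]
    omega
  obtain ⟨w, hw⟩ := this
  rw [Finset.mem_sdiff, hB, Finset.mem_union, not_or] at hw
  obtain ⟨-, hw1, hw2⟩ := hw
  rw [Finset.mem_insert, not_or] at hw1 hw2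
  exact ⟨w, aux_adj_of_not_mem G (Ne.symm (by exact fun h => hw1.1 h.symm)) hw1.2,
    aux_adj_of_not_mem G (fun h => hw2.1 h) hw2.2⟩

lemma aux_card_le_8 (hpp : PseudoPlanar G) (hα : indNum G = 2)
    (heu : Eulerian (indepC G)) (hne : Nonempty V) : Fintype.card V ≤ 8 := by
  by_contra h9
  push_neg at h9
  obtain ⟨x⟩ := hne
  obtain ⟨v, hv5⟩ := (hpp ∅ (aux_empty_mem G)).1 ⟨x, aux_mem_locSet_empty G x⟩
  -- neighbors of v
  set I : Finset V := Finset.univ.filter (fun z => G.Adj v.1 z) with hI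
  have hIeq : I = Finset.univ \ insert v.1 (nnF G v.1) := by
    ext z
    simp only [hI, Finset.mem_filter, Finset.mem_univ, true_and, Finset.mem_sdiff,
      Finset.mem_insert, aux_mem_nnF, not_or]
    constructor
    · intro h
      exact ⟨fun hz => by subst hz; exact G.irrefl h, fun hc => hc.2 h⟩
    · intro ⟨h1, h2⟩
      push_neg at h2
      exact h2 h1
  have hIcard : I.card = Fintype.card V - 3 := by
    rw [hIeq, Finset.card_sdiff_of_subset (Finset.subset_univ _), Finset.card_univ,
      Finset.card_insert_of_notMem (by rw [aux_mem_nnF]; simp), aux_nn_card G hα heu]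
  have hle : I.card ≤ deltaStarV (locG G ∅) v := by
    rw [deltaStarV]
    apply Finset.card_le_card_of_injOn (fun z => ⟨z, aux_mem_locSet_empty G z⟩)
    · intro z hz
      rw [hI, Finset.mem_coe, Finset.mem_filter] at hz
      rw [Finset.mem_coe, Finset.mem_filter]
      refine ⟨Finset.mem_univ _, hz.2, ?_⟩
      obtain ⟨w, hw1, hw2⟩ := aux_common_nbr G hα heu (by omega) v.1 z
      exact ⟨⟨w, aux_mem_locSet_empty G w⟩, hw1, hw2⟩
    · intro z1 _ z2 _ h
      exact congrArg Subtype.val h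
  omega
end Aux4
section Aux5
open Finset Classical
variable {V : Type*} [Fintype V] (G : SimpleGraph V)

lemma aux_compl_adj_of_mem {p q : V} (h : q ∈ nnF G p) : Gᶜ.Adj p q := by
  rw [aux_mem_nnF] at h
  rw [SimpleGraph.compl_adj]
  exact ⟨fun e => h.1 e.symm, h.2⟩

lemma aux_comp (hα : indNum G = 2) (heu : Eulerian (indepC G)) {u v : V}
    (huv : ¬ Gᶜ.Reachable u v) (hc8 : Fintype.card V ≤ 8) :
    ∃ a b c : V, a ≠ u ∧ b ≠ u ∧ c ≠ u ∧ a ≠ b ∧ a ≠ c ∧ b ≠ c ∧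
      Gᶜ.Reachable u a ∧ Gᶜ.Reachable u b ∧ Gᶜ.Reachable u c ∧
      nnF G u = {a, b} ∧ nnF G a = {u, c} ∧ nnF G b = {u, c} ∧ nnF G c = {a, b} := by
  obtain ⟨a, b, c, hau, hbu, hcu, hab, hac, hbc, hnnu, hnna⟩ := aux_quad G hα heu u
  obtain ⟨a', b', c', hav, hbv, hcv, hab', hac', hbc', hnnv, hnna'⟩ := aux_quad G hα heu v
  have hra : Gᶜ.Reachable u a := (aux_compl_adj_of_mem G (by rw [hnnu]; simp)).reachable
  have hrb : Gᶜ.Reachable u b := (aux_compl_adj_of_mem G (by rw [hnnu]; simp)).reachable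
  have hrc : Gᶜ.Reachable u c :=
    hra.trans (aux_compl_adj_of_mem G (by rw [hnna]; simp)).reachable
  have hra' : Gᶜ.Reachable v a' := (aux_compl_adj_of_mem G (by rw [hnnv]; simp)).reachable
  have hrb' : Gᶜ.Reachable v b' := (aux_compl_adj_of_mem G (by rw [hnnv]; simp)).reachable
  have hrc' : Gᶜ.Reachable v c' :=
    hra'.trans (aux_compl_adj_of_mem G (by rw [hnna']; simp)).reachable
  have hub : u ∈ nnF G b := aux_nnF_symm G (by rw [hnnu]; simp)
  obtain ⟨d, hdu, hnnb⟩ := aux_pair_other (aux_nn_card G hα heu b) hub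
  have hd : d ∈ nnF G b := by rw [hnnb]; simp
  have hrd : Gᶜ.Reachable u d := hrb.trans (aux_compl_adj_of_mem G hd).reachable
  have hdb : d ≠ b := ((aux_mem_nnF G).mp hd).1
  have hda : d ≠ a := by
    rintro rfl
    have h2 := aux_nnF_symm G hd
    rw [hnna] at h2
    simp only [Finset.mem_insert, Finset.mem_singleton] at h2
    rcases h2 with rfl | rfl
    · exact hbu rfl
    · exact hbc rfl
  have hdc : d = c := by
    by_contra hdc
    have hSu : ({u, a, b, c, d} : Finset V) ⊆
        Finset.univ.filter (fun z => Gᶜ.Reachable u z) := by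
      intro z hz
      simp only [Finset.mem_insert, Finset.mem_singleton] at hz
      rw [Finset.mem_filter]
      refine ⟨Finset.mem_univ _, ?_⟩
      rcases hz with rfl | rfl | rfl | rfl | rfl
      · exact SimpleGraph.Reachable.refl z
      · exact hra
      · exact hrb
      · exact hrc
      · exact hrd
    have hSv : ({v, a', b', c'} : Finset V) ⊆
        Finset.univ.filter (fun z => Gᶜ.Reachable v z) := by
      intro z hz
      simp only [Finset.mem_insert, Finset.mem_singleton] at hz
      rw [Finset.mem_filter]
      refine ⟨Finset.mem_univ _, ?_⟩
      rcases hz with rfl | rfl | rfl | rfl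
      · exact SimpleGraph.Reachable.refl z
      · exact hra'
      · exact hrb'
      · exact hrc'
    have hdisj : Disjoint (Finset.univ.filter (fun z => Gᶜ.Reachable u z))
        (Finset.univ.filter (fun z => Gᶜ.Reachable v z)) := by
      rw [Finset.disjoint_left]
      intro z hz1 hz2
      rw [Finset.mem_filter] at hz1 hz2
      exact huv (hz1.2.trans hz2.2.symm)
    have hc5 : ({u, a, b, c, d} : Finset V).card = 5 := by
      rw [Finset.card_insert_of_notMem (by simp [Ne.symm hau, Ne.symm hbu, Ne.symm hcu,
          Ne.symm hdu]),
        Finset.card_insert_of_notMem (by simp [hab, hac, Ne.symm hda]),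
        Finset.card_insert_of_notMem (by simp [hbc, Ne.symm hdb]),
        Finset.card_insert_of_notMem (by simp [show ¬c = d from fun h => hdc h.symm]),
        Finset.card_singleton]
    have hc4 : ({v, a', b', c'} : Finset V).card = 4 := by
      rw [Finset.card_insert_of_notMem (by simp [Ne.symm hav, Ne.symm hbv, Ne.symm hcv]),
        Finset.card_insert_of_notMem (by simp [hab', hac']),
        Finset.card_insert_of_notMem (by simp [hbc']),
        Finset.card_singleton]
    have h5 := Finset.card_le_card hSu
    have h4 := Finset.card_le_card hSv
    have hun := Finset.card_union_of_disjoint hdisj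
    have hle := Finset.card_le_univ ((Finset.univ.filter (fun z => Gᶜ.Reachable u z)) ∪
      (Finset.univ.filter (fun z => Gᶜ.Reachable v z)))
    omega
  rw [hdc] at hnnb
  have hnnc : nnF G c = {a, b} := by
    refine aux_eq_pair (aux_nn_card G hα heu c) ?_ ?_ hab
    · exact aux_nnF_symm G (by rw [hnna]; simp)
    · exact aux_nnF_symm G (by rw [hnnb]; simp)
  exact ⟨a, b, c, hau, hbu, hcu, hab, hac, hbc, hra, hrb, hrc, hnnu, hnna, hnnb, hnnc⟩
end Aux5
section Aux6
open Finset Classical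

lemma aux_twoK2_adj (i j : Fin 4) : twoK2.Adj i j ↔
    ((i = 0 ∧ j = 1) ∨ (i = 1 ∧ j = 0) ∨ (i = 2 ∧ j = 3) ∨ (i = 3 ∧ j = 2)) := by
  simp [twoK2, SimpleGraph.fromEdgeSet_adj, Sym2.eq_iff]
  aesop
end Aux6


theorem stmt_17 {V : Type*} [Fintype V] (G : SimpleGraph V)
    (hpp : PseudoPlanar G) (hα : indNum G = 2) (heu : Eulerian (indepC G)) :
    ComplexConnected (indepC G) := by
  classical
  obtain ⟨F, hF, hF2⟩ := aux_exists_pair G hα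
  obtain ⟨x0, hx0⟩ := Finset.card_pos.mp (by rw [hF2]; omega : 0 < F.card)
  have hne : Nonempty V := ⟨x0⟩
  have hc8 : Fintype.card V ≤ 8 := aux_card_le_8 G hpp hα heu hne
  have hEq : (SimpleGraph.fromRel fun a b => ({a, b} : Finset V) ∈ indepC G) = Gᶜ := by
    ext p q
    rw [SimpleGraph.fromRel_adj, SimpleGraph.compl_adj]
    constructor
    · rintro ⟨hpq, h | h⟩
      · exact ⟨hpq, fun hadj => (aux_mem_indepC G _).mp h p (by simp) q (by simp) hadj⟩
      · exact ⟨hpq, fun hadj => (aux_mem_indepC G _).mp h p (by simp) q (by simp) hadj⟩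
    · rintro ⟨hpq, h⟩
      exact ⟨hpq, Or.inl (aux_pair_mem G h)⟩
  unfold ComplexConnected
  rw [hEq, SimpleGraph.connected_iff]
  refine ⟨?_, hne⟩
  intro u v
  by_contra huv
  obtain ⟨a, b, c, hau, hbu, hcu, hab, hac, hbc, hra, hrb, hrc, hnnu, hnna, hnnb, hnnc⟩ :=
    aux_comp G hα heu huv hc8
  have huv' : ¬ Gᶜ.Reachable v u := fun h => huv h.symm
  obtain ⟨a', b', c', hav, hbv, hcv, hab', hac', hbc', hra', hrb', hrc',
      hnnv, hnna', hnnb', hnnc'⟩ := aux_comp G hα heu huv' hc8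
  have hX : ∀ p q : V, Gᶜ.Reachable u p → Gᶜ.Reachable v q → p ≠ q ∧ G.Adj p q := by
    intro p q hp hq
    have hpq : p ≠ q := by rintro rfl; exact huv (hp.trans hq.symm)
    refine ⟨hpq, ?_⟩
    by_contra hnadj
    have hcadj : Gᶜ.Adj p q := (SimpleGraph.compl_adj _ _ _).mpr ⟨hpq, hnadj⟩
    exact huv (hp.trans (hcadj.reachable.trans hq.symm))
  have hruu : Gᶜ.Reachable u u := SimpleGraph.Reachable.refl u
  have hrvv : Gᶜ.Reachable v v := SimpleGraph.Reachable.refl v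
  -- card V = 8
  have hc8' : Fintype.card V = 8 := by
    have hSu : ({u, a, b, c} : Finset V) ⊆
        Finset.univ.filter (fun z => Gᶜ.Reachable u z) := by
      intro z hz
      simp only [Finset.mem_insert, Finset.mem_singleton] at hz
      rw [Finset.mem_filter]
      refine ⟨Finset.mem_univ _, ?_⟩
      rcases hz with rfl | rfl | rfl | rfl
      exacts [hruu, hra, hrb, hrc]
    have hSv : ({v, a', b', c'} : Finset V) ⊆
        Finset.univ.filter (fun z => Gᶜ.Reachable v z) := by
      intro z hz
      simp only [Finset.mem_insert, Finset.mem_singleton] at hz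
      rw [Finset.mem_filter]
      refine ⟨Finset.mem_univ _, ?_⟩
      rcases hz with rfl | rfl | rfl | rfl
      exacts [hrvv, hra', hrb', hrc']
    have hdisj : Disjoint (Finset.univ.filter (fun z => Gᶜ.Reachable u z))
        (Finset.univ.filter (fun z => Gᶜ.Reachable v z)) := by
      rw [Finset.disjoint_left]
      intro z h1 h2
      rw [Finset.mem_filter] at h1 h2
      exact huv (h1.2.trans h2.2.symm)
    have hc4 : ({u, a, b, c} : Finset V).card = 4 := by
      rw [Finset.card_insert_of_notMem (by simp [Ne.symm hau, Ne.symm hbu, Ne.symm hcu]),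
        Finset.card_insert_of_notMem (by simp [hab, hac]),
        Finset.card_insert_of_notMem (by simp [hbc]), Finset.card_singleton]
    have hc4' : ({v, a', b', c'} : Finset V).card = 4 := by
      rw [Finset.card_insert_of_notMem (by simp [Ne.symm hav, Ne.symm hbv, Ne.symm hcv]),
        Finset.card_insert_of_notMem (by simp [hab', hac']),
        Finset.card_insert_of_notMem (by simp [hbc']), Finset.card_singleton]
    have h1 := Finset.card_le_card hSu
    have h2 := Finset.card_le_card hSv
    have hun := Finset.card_union_of_disjoint hdisj
    have hle := Finset.card_le_univ ((Finset.univ.filter (fun z => Gᶜ.Reachable u z)) ∪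
      (Finset.univ.filter (fun z => Gᶜ.Reachable v z)))
    omega
  -- adjacency facts
  have hNadj : ∀ p q : V, q ∈ nnF G p → ¬G.Adj p q := fun p q h => ((aux_mem_nnF G).mp h).2
  have hGab : G.Adj a b := aux_adj_of_not_mem G hab.symm (by rw [hnna]; simp [hbu, hbc])
  have hGuc : G.Adj u c := aux_adj_of_not_mem G hcu
    (by rw [hnnu]; simp [Ne.symm hac, Ne.symm hbc])
  have hNua : ¬G.Adj u a := hNadj u a (by rw [hnnu]; simp)
  have hNub : ¬G.Adj u b := hNadj u b (by rw [hnnu]; simp)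
  have hNac : ¬G.Adj a c := hNadj a c (by rw [hnna]; simp)
  have hNbc : ¬G.Adj b c := hNadj b c (by rw [hnnb]; simp)
  have hGba : G.Adj b a := hGab.symm
  have hGcu : G.Adj c u := hGuc.symm
  have hNau : ¬G.Adj a u := fun h => hNua h.symm
  have hNbu : ¬G.Adj b u := fun h => hNub h.symm
  have hNca : ¬G.Adj c a := fun h => hNac h.symm
  have hNcb : ¬G.Adj c b := fun h => hNbc h.symm
  have hGab' : G.Adj a' b' := aux_adj_of_not_mem G hab'.symm (by rw [hnna']; simp [hbv, hbc'])
  have hGuc' : G.Adj v c' := aux_adj_of_not_mem G hcv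
    (by rw [hnnv]; simp [Ne.symm hac', Ne.symm hbc'])
  have hNua' : ¬G.Adj v a' := hNadj v a' (by rw [hnnv]; simp)
  have hNub' : ¬G.Adj v b' := hNadj v b' (by rw [hnnv]; simp)
  have hNac' : ¬G.Adj a' c' := hNadj a' c' (by rw [hnna']; simp)
  have hNbc' : ¬G.Adj b' c' := hNadj b' c' (by rw [hnnb']; simp)
  have hGba' : G.Adj b' a' := hGab'.symm
  have hGcu' : G.Adj c' v := hGuc'.symm
  have hNau' : ¬G.Adj a' v := fun h => hNua' h.symm
  have hNbu' : ¬G.Adj b' v := fun h => hNub' h.symm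
  have hNca' : ¬G.Adj c' a' := fun h => hNac' h.symm
  have hNcb' : ¬G.Adj c' b' := fun h => hNbc' h.symm
  -- the isomorphism
  have hndA : ([a, b, u, c] : List V).Nodup := by
    simp [List.nodup_cons, hab, hau, hac, hbu, hbc, Ne.symm hcu]
  have hndB : ([a', b', v, c'] : List V).Nodup := by
    simp [List.nodup_cons, hab', hav, hac', hbv, hbc', Ne.symm hcv]
  have hAdjA : ∀ i j : Fin 4, G.Adj (([a, b, u, c] : List V).get i)
      (([a, b, u, c] : List V).get j) ↔
      ((i = 0 ∧ j = 1) ∨ (i = 1 ∧ j = 0) ∨ (i = 2 ∧ j = 3) ∨ (i = 3 ∧ j = 2)) := by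
    intro i j
    fin_cases i <;> fin_cases j
    exacts [iff_of_false G.irrefl (by decide), iff_of_true hGab (by decide),
        iff_of_false hNau (by decide), iff_of_false hNac (by decide),
        iff_of_true hGba (by decide), iff_of_false G.irrefl (by decide),
        iff_of_false hNbu (by decide), iff_of_false hNbc (by decide),
        iff_of_false hNua (by decide), iff_of_false hNub (by decide),
        iff_of_false G.irrefl (by decide), iff_of_true hGuc (by decide),
        iff_of_false hNca (by decide), iff_of_false hNcb (by decide),
        iff_of_true hGcu (by decide), iff_of_false G.irrefl (by decide)]
  have hAdjB : ∀ i j : Fin 4, G.Adj (([a', b', v, c'] : List V).get i)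
      (([a', b', v, c'] : List V).get j) ↔
      ((i = 0 ∧ j = 1) ∨ (i = 1 ∧ j = 0) ∨ (i = 2 ∧ j = 3) ∨ (i = 3 ∧ j = 2)) := by
    intro i j
    fin_cases i <;> fin_cases j
    exacts [iff_of_false G.irrefl (by decide), iff_of_true hGab' (by decide),
        iff_of_false hNau' (by decide), iff_of_false hNac' (by decide),
        iff_of_true hGba' (by decide), iff_of_false G.irrefl (by decide),
        iff_of_false hNbu' (by decide), iff_of_false hNbc' (by decide),
        iff_of_false hNua' (by decide), iff_of_false hNub' (by decide),
        iff_of_false G.irrefl (by decide), iff_of_true hGuc' (by decide),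
        iff_of_false hNca' (by decide), iff_of_false hNcb' (by decide),
        iff_of_true hGcu' (by decide), iff_of_false G.irrefl (by decide)]
  set raw : Fin 4 ⊕ Fin 4 → V :=
    Sum.elim (fun i : Fin 4 => ([a, b, u, c] : List V).get i)
      (fun i : Fin 4 => ([a', b', v, c'] : List V).get i) with hraw
  have hreachA : ∀ i : Fin 4, Gᶜ.Reachable u (([a, b, u, c] : List V).get i) := by
    intro i
    fin_cases i
    exacts [hra, hrb, hruu, hrc]
  have hreachB : ∀ i : Fin 4, Gᶜ.Reachable v (([a', b', v, c'] : List V).get i) := by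
    intro i
    fin_cases i
    exacts [hra', hrb', hrvv, hrc']
  have hrawinj : Function.Injective raw := by
    rintro (i | i) (j | j) h <;> simp only [hraw, Sum.elim_inl, Sum.elim_inr] at h
    · exact congrArg Sum.inl (List.nodup_iff_injective_get.mp hndA h)
    · exact absurd h (hX _ _ (hreachA i) (hreachB j)).1
    · exact absurd h.symm (hX _ _ (hreachA j) (hreachB i)).1
    · exact congrArg Sum.inr (List.nodup_iff_injective_get.mp hndB h)
  have hmemloc : ∀ z : V, z ∈ locSet G (∅ : Finset V) := aux_mem_locSet_empty G
  have hfbij : Function.Bijective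
      (fun p => (⟨raw p, hmemloc _⟩ : ↥(locSet G (∅ : Finset V)))) := by
    rw [Fintype.bijective_iff_injective_and_card]
    constructor
    · intro p q h
      exact hrawinj (congrArg Subtype.val h)
    · have h1 : Fintype.card ↥(locSet G (∅ : Finset V)) = Fintype.card V :=
        Fintype.card_congr (Equiv.subtypeUnivEquiv hmemloc)
      rw [Fintype.card_sum, Fintype.card_fin, h1, hc8']
  set e : (Fin 4 ⊕ Fin 4) ≃ ↥(locSet G (∅ : Finset V)) := Equiv.ofBijective _ hfbij with he
  have hiso : (joinG twoK2 twoK2) ≃g (locG G ∅) := by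
    refine ⟨e, ?_⟩
    intro p q
    have hl : (locG G ∅).Adj (e p) (e q) ↔ G.Adj (raw p) (raw q) := Iff.rfl
    rw [hl]
    rcases p with i | i <;> rcases q with j | j
    · rw [show ((joinG twoK2 twoK2).Adj (Sum.inl i) (Sum.inl j)) = twoK2.Adj i j from rfl,
        aux_twoK2_adj]
      exact hAdjA i j
    · exact iff_of_true (hX _ _ (hreachA i) (hreachB j)).2 True.intro
    · exact iff_of_true (hX _ _ (hreachA j) (hreachB i)).2.symm True.intro
    · rw [show ((joinG twoK2 twoK2).Adj (Sum.inr i) (Sum.inr j)) = twoK2.Adj i j from rfl,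
        aux_twoK2_adj]
      exact hAdjB i j
  exact (hpp ∅ (aux_empty_mem G)).2.false hiso.symm
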